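/- Let 0 ≤ α ≤ 1/30. Then there exists a finite signed measure Θ on ℤ with ‖Θ‖_TV ≤ 0.154 such that H − I = (1−2α)·U*(I + Θ), where U = (I₋₁+I₁)/2 − I; equivalently, ‖H − I − (1−2α)·U‖_TV ≤ 0.154·(1−2α)·‖U*Θ'‖_TV for a suitable Θ' with ‖Θ'‖_TV ≤ 1, i.e. the remainder H − I − (1−2α)U equals 0.154·(1−2α)·U*Θ' with ‖Θ'‖_TV ≤ 1. -/

import Mathlib

open scoped BigOperators

noncomputable section

/-- A (signed) measure on ℤ, represented by its point masses. -/
abbrev SM := ℤ → ℝ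

/-- Point mass at `a ∈ ℤ`. -/
def dirac (a : ℤ) : SM := fun k => if k = a then 1 else 0

/-- Convolution of two measures on ℤ. -/
def conv (M V : SM) : SM := fun m => ∑' k : ℤ, M (m - k) * V k

/-- Convolution powers, `convPow M 0 = I` (point mass at 0). -/
def convPow (M : SM) : ℕ → SM
  | 0 => dirac 0
  | n + 1 => conv (convPow M n) M

/-- Exponential of a measure: `exp M = ∑_{j≥0} M^{*j}/j!`. -/
def expSM (M : SM) : SM := fun k => ∑' j : ℕ, convPow M j k / (Nat.factorial j : ℝ)

/-- Total variation norm `‖M‖_TV = ∑_k |M{k}|`. -/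
def tvNorm (M : SM) : ℝ := ∑' k : ℤ, |M k|

/-- Local (point) norm `‖M‖_∞ = sup_k |M{k}|`. -/
def locNorm (M : SM) : ℝ := ⨆ k : ℤ, |M k|

/-- `M((-∞,k])`. -/
def cdf (M : SM) (k : ℤ) : ℝ := ∑' j : ℤ, if j ≤ k then M j else 0

/-- Wasserstein norm `‖M‖_W = ∑_k |M((-∞,k])|`. -/
def wNorm (M : SM) : ℝ := ∑' k : ℤ, |cdf M k|

/-- ℓ_r norm. -/
def lrNorm (r : ℝ) (M : SM) : ℝ := (∑' k : ℤ, |M k| ^ r) ^ (1 / r)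

/-- L_r norm. -/
def LrNorm (r : ℝ) (M : SM) : ℝ := (∑' k : ℤ, |cdf M k| ^ r) ^ (1 / r)

/-- Transition probabilities of the three-state Markov chain: states `0,1,2`
correspond to `a₁,a₂,a₃`; from `a₁` or `a₃` the probabilities are `(α, 1-2α, α)`,
from `a₂` they are `(β, 1-2β, β)`. -/
def transP (a b : ℝ) (i j : Fin 3) : ℝ :=
  if i = 1 then (if j = 1 then 1 - 2 * b else b) else (if j = 1 then 1 - 2 * a else a)

/-- Joint distribution of `(Sₙ, ξₙ)`, with `f(a₁)=-1, f(a₂)=0, f(a₃)=1`,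
`Sₙ = f(ξ₁)+⋯+f(ξₙ)` and initial distribution `p`. -/
def jointDist (a b : ℝ) (p : Fin 3 → ℝ) : ℕ → ℤ → Fin 3 → ℝ
  | 0 => fun k i => if k = 0 then p i else 0
  | n + 1 => fun k j =>
      ∑ i : Fin 3, jointDist a b p n (k - ((j : ℤ) - 1)) i * transP a b i j

/-- `Fₙ`, the distribution of `Sₙ`. -/
def F (a b : ℝ) (p : Fin 3 → ℝ) (n : ℕ) : SM := fun k => ∑ j : Fin 3, jointDist a b p n k j

/-- The symmetric Skellam distribution `D = exp{λ(I₁-I) + λ(I₋₁-I)}`,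
`λ = β/(1-2α+2β)`. -/
def skellam (a b : ℝ) : SM :=
  expSM ((b / (1 - 2 * a + 2 * b)) • (dirac 1 - dirac 0)
    + (b / (1 - 2 * a + 2 * b)) • (dirac (-1) - dirac 0))

/-- `L = (I₋₁ + I₁)/2`. -/
def Lm : SM := (2 : ℝ)⁻¹ • (dirac (-1) + dirac 1)

/-- `U = L - I`. -/
def Um : SM := Lm - dirac 0

/-- The measure `A₁` of the first-order asymptotic expansion. -/
def A1 (a b p2 : ℝ) : SM :=
  (2 * (a - b) / (1 - 2 * a + 2 * b) * ((1 - 2 * a) / (1 - 2 * a + 2 * b) - p2)) • Um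

/-- The measure `A₂` of the first-order asymptotic expansion. -/
def A2 (a b : ℝ) : SM :=
  (2 * b / (1 - 2 * a + 2 * b) ^ 2 *
    (2 * (a - b) * (1 - 2 * a) / (1 - 2 * a + 2 * b) - b)) • convPow Um 2

/-- The compound geometric law `H = (1-2α) Σ_j (2α)^j L^{*(j+1)}`. -/
def Hm (a : ℝ) : SM := fun k => ∑' j : ℕ, (1 - 2 * a) * (2 * a) ^ j * convPow Lm (j + 1) k

/-- `G = exp{(2β(1-2α)/(1-2α+2β))(H - I)}`. -/
def Gm (a b : ℝ) : SM := expSM ((2 * b * (1 - 2 * a) / (1 - 2 * a + 2 * b)) • (Hm a - dirac 0))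

lemma conv_Lm_apply (M : SM) (k : ℤ) : conv M Lm k = (M (k-1) + M (k+1))/2 := by
  unfold conv
  rw [tsum_eq_sum (s := ({-1, 1} : Finset ℤ)) ?side]
  case side =>
    intro b hb
    simp only [Finset.mem_insert, Finset.mem_singleton, not_or] at hb
    simp [Lm, dirac, Pi.smul_apply, Pi.add_apply, smul_eq_mul, hb.1, hb.2]
  · simp [Lm, dirac, Pi.smul_apply, Pi.add_apply, smul_eq_mul]
    ring

lemma Um_apply (x : ℤ) : Um x = (if x = -1 then (1:ℝ)/2 else 0) + (if x = 1 then (1:ℝ)/2 else 0)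
      - (if x = 0 then (1:ℝ) else 0) := by
  simp [Um, Lm, dirac, Pi.sub_apply, Pi.smul_apply, Pi.add_apply, smul_eq_mul]

lemma conv_Um_apply (V : SM) (k : ℤ) :
    conv Um V k = (V (k-1) + V (k+1))/2 - V k := by
  unfold conv
  rw [tsum_eq_sum (s := ({k-1, k, k+1} : Finset ℤ)) ?side]
  case side =>
    intro b hb
    simp only [Finset.mem_insert, Finset.mem_singleton, not_or] at hb
    rw [Um_apply]
    rw [if_neg (by omega), if_neg (by omega), if_neg (by omega)]
    ring
  · rw [Finset.sum_insert (by intro h; simp at h; omega), Finset.sum_insert (by simp),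
      Finset.sum_singleton]
    rw [Um_apply, Um_apply, Um_apply]
    rw [show k - (k-1) = 1 by ring, show k - k = 0 by ring, show k - (k+1) = -1 by ring]
    norm_num
    ring
lemma Lm_eq (k : ℤ) : Lm k = (dirac 0 (k-1) + dirac 0 (k+1))/2 := by
  simp only [Lm, dirac, Pi.smul_apply, Pi.add_apply, smul_eq_mul]
  have h1 : ((k:ℤ) - 1 = 0) ↔ (k = 1) := by omega
  have h2 : ((k:ℤ) + 1 = 0) ↔ (k = -1) := by omega
  simp only [h1, h2]
  split_ifs <;> norm_num

lemma convPow_step (n : ℕ) (k : ℤ) :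
    convPow Lm (n+1) k = (convPow Lm n (k-1) + convPow Lm n (k+1))/2 :=
  conv_Lm_apply (convPow Lm n) k

lemma convPow_Lm_prop (n : ℕ) :
    (∀ k, 0 ≤ convPow Lm n k) ∧ Summable (convPow Lm n) ∧ ∑' k, convPow Lm n k = 1 := by
  induction n with
  | zero =>
    refine ⟨fun k => ?_, summable_of_ne_finset_zero (s := ({0} : Finset ℤ)) fun b hb => ?_, ?_⟩
    · simp only [convPow, dirac]; split <;> norm_num
    · simp only [Finset.mem_singleton] at hb
      simp [convPow, dirac, hb]
    · rw [tsum_eq_sum (s := ({0} : Finset ℤ)) (fun b hb => by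
        simp only [Finset.mem_singleton] at hb; simp [convPow, dirac, hb])]
      simp [convPow, dirac]
  | succ n ih =>
    obtain ⟨h0, hs, ht⟩ := ih
    have hs1 : Summable (fun k : ℤ => convPow Lm n (k-1)) := by
      have := (Equiv.subRight (1:ℤ)).summable_iff.mpr hs
      simpa [Function.comp_def] using this
    have hs2 : Summable (fun k : ℤ => convPow Lm n (k+1)) := by
      have := (Equiv.addRight (1:ℤ)).summable_iff.mpr hs
      simpa [Function.comp_def] using this
    have ht1 : ∑' k : ℤ, convPow Lm n (k-1) = 1 := by
      rw [← ht]; exact (Equiv.subRight (1:ℤ)).tsum_eq (convPow Lm n)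
    have ht2 : ∑' k : ℤ, convPow Lm n (k+1) = 1 := by
      rw [← ht]; exact (Equiv.addRight (1:ℤ)).tsum_eq (convPow Lm n)
    have hfun : convPow Lm (n+1) = fun k => (convPow Lm n (k-1) + convPow Lm n (k+1))/2 :=
      funext fun k => convPow_step n k
    refine ⟨fun k => ?_, ?_, ?_⟩
    · rw [convPow_step]
      have a1 := h0 (k-1); have a2 := h0 (k+1); linarith
    · rw [hfun]; exact (hs1.add hs2).div_const 2
    · rw [hfun, tsum_div_const, Summable.tsum_add hs1 hs2, ht1, ht2]; norm_num

lemma convPow_Lm_le_one (n : ℕ) (k : ℤ) : convPow Lm n k ≤ 1 := by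
  obtain ⟨h0, hs, ht⟩ := convPow_Lm_prop n
  have := Summable.le_tsum hs k (fun j _ => h0 j)
  rwa [ht] at this

lemma summable_geom_aux {c : ℝ} (hc0 : 0 ≤ c) (hc1 : c < 1) (g : ℕ → ℝ)
    (hg0 : ∀ i, 0 ≤ g i) (hg1 : ∀ i, g i ≤ 1) : Summable (fun i => c ^ i * g i) := by
  refine Summable.of_nonneg_of_le (fun i => mul_nonneg (pow_nonneg hc0 i) (hg0 i))
    (fun i => ?_) (summable_geometric_of_lt_one hc0 hc1)
  calc c ^ i * g i ≤ c ^ i * 1 := by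
        exact mul_le_mul_of_nonneg_left (hg1 i) (pow_nonneg hc0 i)
    _ = c ^ i := mul_one _

lemma summable_geom_aux' {c : ℝ} (hc0 : 0 ≤ c) (hc1 : c < 1) (g : ℕ → ℝ)
    (hg0 : ∀ i, 0 ≤ g i) (hg1 : ∀ i, g i ≤ 1) : Summable (fun i => c ^ (i+1) * g i) := by
  refine ((summable_geom_aux hc0 hc1 g hg0 hg1).mul_left c).congr fun i => ?_
  ring
theorem H_sub_I_first_order :
    ∀ a : ℝ, 0 ≤ a → a ≤ 1 / 30 →
      ∃ Θ : SM, tvNorm Θ ≤ 1 ∧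
        Hm a - dirac 0 - (1 - 2 * a) • Um = (0.154 * (1 - 2 * a)) • conv Um Θ := by
  intro a ha ha'
  have hc0 : (0:ℝ) ≤ 2 * a := by linarith
  have hc15 : 2 * a ≤ 1/15 := by linarith
  have hc1 : 2 * a < 1 := by linarith
  have hP0 : ∀ n (k : ℤ), 0 ≤ convPow Lm n k := fun n => (convPow_Lm_prop n).1
  have hPs : ∀ n, Summable (convPow Lm n) := fun n => (convPow_Lm_prop n).2.1
  have hPt : ∀ n, ∑' k : ℤ, convPow Lm n k = 1 := fun n => (convPow_Lm_prop n).2.2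
  set c : ℝ := 2 * a with hcdef
  set T : SM := fun k => ∑' i : ℕ, c ^ (i+1) * convPow Lm (i+1) k with hT
  set d : ℝ := (0.154 * (1 - c))⁻¹ with hd
  have hdpos : (0:ℝ) < 0.154 * (1 - c) := by rw [hcdef]; nlinarith
  have hdnn : 0 ≤ d := le_of_lt (inv_pos.mpr hdpos)
  have hsT : ∀ k : ℤ, Summable (fun i : ℕ => c ^ (i+1) * convPow Lm (i+1) k) :=
    fun k => summable_geom_aux' hc0 hc1 _ (fun i => hP0 _ _) (fun i => convPow_Lm_le_one _ _)
  have hTnn : ∀ k, 0 ≤ T k :=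
    fun k => tsum_nonneg fun i => mul_nonneg (pow_nonneg hc0 _) (hP0 _ _)
  have hdiracnn : ∀ k : ℤ, 0 ≤ dirac 0 k := by
    intro k; simp only [dirac]; split <;> norm_num
  have hSnn : ∀ k : ℤ, 0 ≤ c * dirac 0 k + T k :=
    fun k => add_nonneg (mul_nonneg hc0 (hdiracnn k)) (hTnn k)
  refine ⟨fun k => d * (c * dirac 0 k + T k), ?_, ?_⟩
  · -- tvNorm bound
    unfold tvNorm
    apply tsum_le_of_sum_le' zero_le_one
    intro s
    have hstep1 : ∑ k ∈ s, |d * (c * dirac 0 k + T k)| = d * (c * (∑ k ∈ s, dirac 0 k) + ∑ k ∈ s, T k) := by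
      rw [Finset.mul_sum, ← Finset.sum_add_distrib, Finset.mul_sum]
      refine Finset.sum_congr rfl fun k _ => ?_
      rw [abs_of_nonneg (mul_nonneg hdnn (hSnn k)), mul_add]
    rw [hstep1]
    have hbd1 : ∑ k ∈ s, dirac 0 k ≤ 1 := by
      simp only [dirac]
      rw [Finset.sum_ite_eq' s 0 (fun _ => (1:ℝ))]
      split <;> norm_num
    have hbd2 : ∑ k ∈ s, T k ≤ c / (1 - c) := by
      have h1 : ∑ k ∈ s, T k = ∑' i : ℕ, ∑ k ∈ s, c ^ (i+1) * convPow Lm (i+1) k := by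
        rw [Summable.tsum_finsetSum (fun k _ => hsT k)]
      rw [h1]
      have h2 : ∀ i : ℕ, ∑ k ∈ s, c ^ (i+1) * convPow Lm (i+1) k ≤ c ^ (i+1) := by
        intro i
        rw [← Finset.mul_sum]
        have hle : ∑ k ∈ s, convPow Lm (i+1) k ≤ 1 := by
          rw [← hPt (i+1)]
          exact Summable.sum_le_tsum s (fun j _ => hP0 _ j) (hPs _)
        calc c ^ (i+1) * ∑ k ∈ s, convPow Lm (i+1) k ≤ c ^ (i+1) * 1 :=
              mul_le_mul_of_nonneg_left hle (pow_nonneg hc0 _)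
          _ = c ^ (i+1) := mul_one _
      have h3 : Summable (fun i : ℕ => ∑ k ∈ s, c ^ (i+1) * convPow Lm (i+1) k) := by
        refine (summable_geom_aux' hc0 hc1 (fun i => ∑ k ∈ s, convPow Lm (i+1) k)
          (fun i => Finset.sum_nonneg fun j _ => hP0 _ j)
          (fun i => by
            rw [← hPt (i+1)]
            exact Summable.sum_le_tsum s (fun j _ => hP0 _ j) (hPs _))).congr fun i => ?_
        rw [Finset.mul_sum]
      have h4 : Summable (fun i : ℕ => c ^ (i+1)) := by
        refine ((summable_geometric_of_lt_one hc0 hc1).mul_left c).congr fun i => ?_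
        ring
      calc ∑' i : ℕ, ∑ k ∈ s, c ^ (i+1) * convPow Lm (i+1) k ≤ ∑' i : ℕ, c ^ (i+1) :=
            Summable.tsum_le_tsum h2 h3 h4
        _ = c * (1 - c)⁻¹ := by
            rw [← tsum_geometric_of_lt_one hc0 hc1, ← tsum_mul_left]
            exact tsum_congr fun i => by ring
        _ = c / (1 - c) := (div_eq_mul_inv c (1-c)).symm
    have hTnns : 0 ≤ ∑ k ∈ s, T k := Finset.sum_nonneg fun k _ => hTnn k
    have hq : c / (1 - c) * (1 - c) = c := div_mul_cancel₀ c (by rw [hcdef]; nlinarith)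
    have hkey : c + c / (1 - c) ≤ 0.154 * (1 - c) := by
      have hqnn : 0 ≤ c / (1 - c) := div_nonneg hc0 (by rw [hcdef]; nlinarith)
      rw [hcdef] at hq hqnn ⊢
      nlinarith [hq, hqnn, ha, ha']
    calc d * (c * ∑ k ∈ s, dirac 0 k + ∑ k ∈ s, T k) ≤ d * (c + c / (1 - c)) := by
          have : c * ∑ k ∈ s, dirac 0 k ≤ c := by
            calc c * ∑ k ∈ s, dirac 0 k ≤ c * 1 := mul_le_mul_of_nonneg_left hbd1 hc0
              _ = c := mul_one _
          exact mul_le_mul_of_nonneg_left (by linarith [hbd2]) hdnn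
      _ ≤ d * (0.154 * (1 - c)) := mul_le_mul_of_nonneg_left hkey hdnn
      _ = 1 := inv_mul_cancel₀ (ne_of_gt hdpos)
  · -- identity
    funext k
    have hs1 := hsT (k-1)
    have hs2 := hsT (k+1)
    have hs3 := hsT k
    have hs4 : Summable (fun j : ℕ => c ^ j * convPow Lm (j+1) k) :=
      summable_geom_aux hc0 hc1 _ (fun i => hP0 _ _) (fun i => convPow_Lm_le_one _ _)
    set A : ℝ := ∑' i : ℕ, c ^ (i+1) * convPow Lm (i+2) k with hA
    have hAeq : (T (k-1) + T (k+1))/2 = A := by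
      rw [hT, hA]
      simp only
      rw [← Summable.tsum_add hs1 hs2, ← tsum_div_const]
      refine tsum_congr fun i => ?_
      rw [show (i + 2 : ℕ) = (i+1) + 1 from rfl, convPow_step (i+1) k]
      ring
    have hP1k : convPow Lm 1 k = Lm k := by
      rw [show convPow Lm 1 k = conv (convPow Lm 0) Lm k from rfl, conv_Lm_apply,
        show convPow Lm 0 = dirac 0 from rfl, ← Lm_eq]
    have hHmk : Hm a k = Lm k + A - T k := by
      rw [show Hm a k = ∑' j : ℕ, (1 - c) * c ^ j * convPow Lm (j+1) k from rfl]
      calc ∑' j : ℕ, (1 - c) * c ^ j * convPow Lm (j+1) k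
          = ∑' j : ℕ, (c ^ j * convPow Lm (j+1) k - c ^ (j+1) * convPow Lm (j+1) k) :=
            tsum_congr fun j => by ring
        _ = (∑' j : ℕ, c ^ j * convPow Lm (j+1) k) - T k := by
            rw [Summable.tsum_sub hs4 hs3, hT]
        _ = Lm k + A - T k := by
            rw [Summable.tsum_eq_zero_add hs4, hA]
            simp only [pow_zero, one_mul, hP1k]
    have hmul : 0.154 * (1 - c) * d = 1 := mul_inv_cancel₀ (ne_of_gt hdpos)
    show Hm a k - dirac 0 k - (1 - c) * Um k
        = 0.154 * (1 - c) * conv Um (fun k => d * (c * dirac 0 k + T k)) k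
    rw [conv_Um_apply]
    rw [show Um k = Lm k - dirac 0 k from rfl]
    have hLmk := Lm_eq k
    linear_combination hHmk - (0.154 * (1 - c) * d) * hAeq
      + (0.154 * (1 - c) * d * c) * hLmk
      - (c * Lm k + A - T k - c * dirac 0 k) * hmul
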